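/- Let p ≥ 2 be an integer and let L ≥ 0, κ_D ≥ 0, ξ ≥ 0, α ≥ 0, A ≥ 0, e ≥ 0, s ≥ 0 and 0 < σ ≤ σ' be real numbers. Assume A ≤ (L/(p−1)!) · s^{p−1} + (1/(p−2)!) · e · s^{p−2} and e^{p+1} ≤ κ_D · ξ. Then A^{(p+1)/(p−1)} / σ'^{α} ≤ κ₁ · s^{p+1} / σ'^{α} + κ₂ · ξ / σ^{α}, where κ₁ = 3^{2/(p−1)} · ( (L/(p−1)!)^{(p+1)/(p−1)} + ((p−2)/(p−1)!)^{(p+1)/(p−1)} ) and κ₂ = 3^{2/(p−1)} · κ_D · (1/(p−1)!)^{(p+1)/(p−1)}. -/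

import Mathlib

open Real

/-- Three-term power mean inequality. -/
lemma aux_pow3 {x y z q : ℝ} (hx : 0 ≤ x) (hy : 0 ≤ y) (hz : 0 ≤ z) (hq : 1 ≤ q) :
    (x + y + z) ^ q ≤ 3 ^ (q - 1) * (x ^ q + y ^ q + z ^ q) := by
  have h := Real.rpow_arith_mean_le_arith_mean_rpow (Finset.univ : Finset (Fin 3))
    ![1/3, 1/3, 1/3] ![3*x, 3*y, 3*z]
    (by intro i _; fin_cases i <;> norm_num)
    (by simp [Fin.sum_univ_three]; norm_num)
    (by intro i _; fin_cases i <;> simp <;> positivity) hq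
  simp only [Fin.sum_univ_three, Matrix.cons_val_zero, Matrix.cons_val_one, Matrix.head_cons,
    Matrix.cons_val_two, Matrix.tail_cons] at h
  have e1 : (1:ℝ)/3 * (3*x) + 1/3 * (3*y) + 1/3 * (3*z) = x + y + z := by ring
  rw [e1] at h
  have h3 : (0:ℝ) ≤ 3 := by norm_num
  have e2 : ∀ t : ℝ, 0 ≤ t → (3*t) ^ q = 3 ^ q * t ^ q := fun t ht =>
    Real.mul_rpow h3 ht
  rw [e2 x hx, e2 y hy, e2 z hz] at h
  have e3 : (3:ℝ) ^ (q - 1) = 3 ^ q / 3 := by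
    rw [Real.rpow_sub (by norm_num), Real.rpow_one]
  calc (x + y + z) ^ q ≤ 1/3 * (3^q * x^q) + 1/3 * (3^q * y^q) + 1/3 * (3^q * z^q) := h
    _ = 3 ^ (q-1) * (x ^ q + y ^ q + z ^ q) := by rw [e3]; ring

/-- Hessian error bound for the inexact Taylor model (Lemma 2 in the paper). -/
theorem stmt_3 (p : ℕ) (hp : 2 ≤ p)
    (L κD ξ α A e s σ σ' : ℝ)
    (hL : 0 ≤ L) (hκD : 0 ≤ κD) (hξ : 0 ≤ ξ) (hα : 0 ≤ α)
    (hA : 0 ≤ A) (he : 0 ≤ e) (hs : 0 ≤ s) (hσ : 0 < σ) (hσ' : σ ≤ σ')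
    (hAle : A ≤ L / ((p - 1).factorial : ℝ) * s ^ (p - 1)
        + 1 / ((p - 2).factorial : ℝ) * e * s ^ (p - 2))
    (hepow : e ^ (p + 1) ≤ κD * ξ) :
    A ^ (((p : ℝ) + 1) / ((p : ℝ) - 1)) / σ' ^ α ≤
      (3 : ℝ) ^ ((2 : ℝ) / ((p : ℝ) - 1)) *
          ((L / ((p - 1).factorial : ℝ)) ^ (((p : ℝ) + 1) / ((p : ℝ) - 1)) +
            (((p : ℝ) - 2) / ((p - 1).factorial : ℝ)) ^ (((p : ℝ) + 1) / ((p : ℝ) - 1))) *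
          s ^ (p + 1) / σ' ^ α +
        (3 : ℝ) ^ ((2 : ℝ) / ((p : ℝ) - 1)) * κD *
          ((1 : ℝ) / ((p - 1).factorial : ℝ)) ^ (((p : ℝ) + 1) / ((p : ℝ) - 1)) * ξ / σ ^ α := by
  set pr : ℝ := (p : ℝ) with hprdef
  have hpr : (2:ℝ) ≤ pr := by rw [hprdef]; exact_mod_cast hp
  have hpr1 : (0:ℝ) < pr - 1 := by linarith
  set q : ℝ := (pr + 1) / (pr - 1) with hqdef
  have hq1 : 1 ≤ q := by
    rw [hqdef, le_div_iff₀ hpr1]; linarith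
  have hq0 : 0 ≤ q := le_trans zero_le_one hq1
  -- casts of p-1, p-2
  have hc1 : ((p - 1 : ℕ) : ℝ) = pr - 1 := by
    have : (1:ℕ) ≤ p := by omega
    push_cast [Nat.cast_sub this]; ring
  have hc2 : ((p - 2 : ℕ) : ℝ) = pr - 2 := by
    push_cast [Nat.cast_sub hp]; ring
  set N : ℝ := ((p - 1).factorial : ℝ) with hNdef
  have hN0 : 0 < N := by positivity
  have hfac : N = (pr - 1) * ((p - 2).factorial : ℝ) := by
    have hp1 : p - 1 = (p - 2) + 1 := by omega
    rw [hNdef, hp1, Nat.factorial_succ]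
    push_cast [hc2]
    ring
  have hM0 : (0:ℝ) < ((p - 2).factorial : ℝ) := by positivity
  -- Step 1: Young's inequality
  have hyoung : e * s ^ (p - 2) ≤
      1 / (pr - 1) * e ^ (p - 1) + (pr - 2) / (pr - 1) * s ^ (p - 1) := by
    have hw1 : (0:ℝ) ≤ 1 / (pr - 1) := by positivity
    have hw2 : (0:ℝ) ≤ (pr - 2) / (pr - 1) := by
      apply div_nonneg <;> linarith
    have hp1 : (0:ℝ) ≤ e ^ (p - 1) := by positivity
    have hp2 : (0:ℝ) ≤ s ^ (p - 1) := by positivity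
    have hw : 1 / (pr - 1) + (pr - 2) / (pr - 1) = 1 := by
      field_simp; ring
    have h := Real.geom_mean_le_arith_mean2_weighted hw1 hw2 hp1 hp2 hw
    have e1 : (e ^ (p - 1)) ^ (1 / (pr - 1)) = e := by
      rw [← Real.rpow_natCast e (p - 1), ← Real.rpow_mul he, hc1,
        mul_one_div, div_self (ne_of_gt hpr1), Real.rpow_one]
    have e2 : (s ^ (p - 1)) ^ ((pr - 2) / (pr - 1)) = s ^ (p - 2) := by
      rw [← Real.rpow_natCast s (p - 1), ← Real.rpow_mul hs, hc1,
        mul_div_assoc', mul_comm, mul_div_assoc, div_self (ne_of_gt hpr1), mul_one,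
        ← hc2, Real.rpow_natCast]
    rwa [e1, e2] at h
  -- Step 2: A ≤ x + y + z
  set x : ℝ := L / N * s ^ (p - 1) with hxdef
  set y : ℝ := (pr - 2) / N * s ^ (p - 1) with hydef
  set z : ℝ := 1 / N * e ^ (p - 1) with hzdef
  have hx0 : 0 ≤ x := by positivity
  have hy0 : 0 ≤ y := by
    apply mul_nonneg
    · apply div_nonneg; linarith; exact le_of_lt hN0
    · positivity
  have hz0 : 0 ≤ z := by positivity
  have hAxyz : A ≤ x + y + z := by
    have h2 : 1 / ((p - 2).factorial : ℝ) * e * s ^ (p - 2) ≤ y + z := by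
      have := mul_le_mul_of_nonneg_left hyoung
        (le_of_lt (by positivity : (0:ℝ) < 1 / ((p - 2).factorial : ℝ)))
      rw [hydef, hzdef, hfac]
      calc 1 / ((p - 2).factorial : ℝ) * e * s ^ (p - 2)
          = 1 / ((p - 2).factorial : ℝ) * (e * s ^ (p - 2)) := by ring
        _ ≤ 1 / ((p - 2).factorial : ℝ) *
            (1 / (pr - 1) * e ^ (p - 1) + (pr - 2) / (pr - 1) * s ^ (p - 1)) := this
        _ = (pr - 2) / ((pr - 1) * ((p - 2).factorial : ℝ)) * s ^ (p - 1)
            + 1 / ((pr - 1) * ((p - 2).factorial : ℝ)) * e ^ (p - 1) := by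
            field_simp; ring
    calc A ≤ L / N * s ^ (p - 1) + 1 / ((p - 2).factorial : ℝ) * e * s ^ (p - 2) := hAle
      _ ≤ x + (y + z) := by rw [hxdef]; exact add_le_add le_rfl h2
      _ = x + y + z := by ring
  -- Step 3: power mean
  have hstep3 : A ^ q ≤ 3 ^ (q - 1) * (x ^ q + y ^ q + z ^ q) :=
    le_trans (Real.rpow_le_rpow hA hAxyz hq0) (aux_pow3 hx0 hy0 hz0 hq1)
  -- identify exponent pieces
  have hq2 : q - 1 = 2 / (pr - 1) := by
    rw [hqdef]; field_simp; ring
  have hpow : ∀ t : ℝ, 0 ≤ t → (t ^ (p - 1)) ^ q = t ^ (p + 1) := by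
    intro t ht
    rw [← Real.rpow_natCast t (p - 1), ← Real.rpow_mul ht, hc1, hqdef,
      mul_div_assoc', mul_comm, mul_div_assoc, div_self (ne_of_gt hpr1), mul_one]
    rw [show pr + 1 = ((p + 1 : ℕ) : ℝ) by push_cast; ring, Real.rpow_natCast]
  have hxq : x ^ q = (L / N) ^ q * s ^ (p + 1) := by
    rw [hxdef, Real.mul_rpow (by positivity) (by positivity), hpow s hs]
  have hyq : y ^ q = ((pr - 2) / N) ^ q * s ^ (p + 1) := by
    rw [hydef, Real.mul_rpow (by apply div_nonneg; linarith; exact le_of_lt hN0)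
      (by positivity), hpow s hs]
  have hzq : z ^ q ≤ (1 / N) ^ q * (κD * ξ) := by
    rw [hzdef, Real.mul_rpow (by positivity) (by positivity), hpow e he]
    exact mul_le_mul_of_nonneg_left hepow (by positivity)
  -- combine
  have hmain : A ^ q ≤ 3 ^ (q - 1) * ((L / N) ^ q + ((pr - 2) / N) ^ q) * s ^ (p + 1)
      + 3 ^ (q - 1) * κD * (1 / N) ^ q * ξ := by
    have h30 : (0:ℝ) ≤ (3:ℝ) ^ (q - 1) := le_of_lt (Real.rpow_pos_of_pos (by norm_num) _)
    calc A ^ q ≤ 3 ^ (q - 1) * (x ^ q + y ^ q + z ^ q) := hstep3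
      _ ≤ 3 ^ (q - 1) * ((L / N) ^ q * s ^ (p + 1) + ((pr - 2) / N) ^ q * s ^ (p + 1)
          + (1 / N) ^ q * (κD * ξ)) := by
          apply mul_le_mul_of_nonneg_left _ h30
          rw [hxq, hyq]; exact add_le_add le_rfl hzq
      _ = 3 ^ (q - 1) * ((L / N) ^ q + ((pr - 2) / N) ^ q) * s ^ (p + 1)
          + 3 ^ (q - 1) * κD * (1 / N) ^ q * ξ := by ring
  -- Step 5: divide by σ'^α resp σ^α
  have hσ'0 : (0:ℝ) < σ' := lt_of_lt_of_le hσ hσ'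
  have hσa : (0:ℝ) < σ ^ α := Real.rpow_pos_of_pos hσ _
  have hσ'a : (0:ℝ) < σ' ^ α := Real.rpow_pos_of_pos hσ'0 _
  have hσle : σ ^ α ≤ σ' ^ α := Real.rpow_le_rpow (le_of_lt hσ) hσ' hα
  rw [← hq2]
  have hterm2 : (0:ℝ) ≤ 3 ^ (q - 1) * κD * (1 / N) ^ q * ξ := by
    have : (0:ℝ) ≤ (3:ℝ) ^ (q - 1) := le_of_lt (Real.rpow_pos_of_pos (by norm_num) _)
    positivity
  calc A ^ q / σ' ^ α
      ≤ (3 ^ (q - 1) * ((L / N) ^ q + ((pr - 2) / N) ^ q) * s ^ (p + 1)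
        + 3 ^ (q - 1) * κD * (1 / N) ^ q * ξ) / σ' ^ α := by
        gcongr
    _ = 3 ^ (q - 1) * ((L / N) ^ q + ((pr - 2) / N) ^ q) * s ^ (p + 1) / σ' ^ α
        + 3 ^ (q - 1) * κD * (1 / N) ^ q * ξ / σ' ^ α := by ring
    _ ≤ 3 ^ (q - 1) * ((L / N) ^ q + ((pr - 2) / N) ^ q) * s ^ (p + 1) / σ' ^ α
        + 3 ^ (q - 1) * κD * (1 / N) ^ q * ξ / σ ^ α := by
        apply add_le_add le_rfl
        exact div_le_div_of_nonneg_left hterm2 hσa hσle
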